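/- Let Φ : A₁ → A₂ be a Schwarz map between finite-dimensional C*-algebras, i.e., Φ(X)*Φ(X) ≤ c·Φ(X*X) for all X and some finite c ≥ 0. Then the Hilbert–Schmidt adjoint Φ* is also a Schwarz map, with ‖Φ*‖_S ≤ d₁·d₂·‖Φ‖_S, where dᵢ are the dimensions of the underlying Hilbert spaces. -/

import Mathlib

open Matrix ComplexOrder

namespace AdjSchwarz

lemma star_mul_self_c (z : ℂ) : star z * z = (Complex.normSq z : ℂ) := by
  rw [Complex.star_def, mul_comm, Complex.mul_conj]

lemma trace_vmv (n m : ℕ) (w : Fin n → ℂ) (v : Fin m → ℂ) (M : Matrix (Fin n) (Fin m) ℂ) :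
    ((vecMulVec w (star v))ᴴ * M).trace = star w ⬝ᵥ (M *ᵥ v) := by
  simp only [Matrix.trace, Matrix.diag, Matrix.mul_apply, Matrix.conjTranspose_apply,
    vecMulVec_apply, dotProduct, mulVec, Pi.star_apply, star_mul', star_star]
  rw [Finset.sum_comm]
  exact Finset.sum_congr rfl fun a _ => by
    rw [Finset.mul_sum]; exact Finset.sum_congr rfl fun b _ => by ring

lemma vmv_sq (n m : ℕ) (w : Fin n → ℂ) (v : Fin m → ℂ) :
    (vecMulVec w (star v))ᴴ * (vecMulVec w (star v)) = (star w ⬝ᵥ w) • vecMulVec v (star v) := by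
  ext a b
  simp only [Matrix.mul_apply, Matrix.conjTranspose_apply, vecMulVec_apply, Pi.star_apply,
    Matrix.smul_apply, dotProduct, star_mul', star_star, smul_eq_mul, Finset.sum_mul]
  exact Finset.sum_congr rfl fun j _ => by ring

lemma vmv_conjT (n m : ℕ) (u : Fin n → ℂ) (v : Fin m → ℂ) :
    (vecMulVec u (star v))ᴴ = vecMulVec v (star u) := by
  ext a b
  simp only [Matrix.conjTranspose_apply, vecMulVec_apply, Pi.star_apply, star_mul', star_star]
  ring

lemma dot_star_self (n : ℕ) (w : Fin n → ℂ) :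
    star w ⬝ᵥ w = ((∑ i, Complex.normSq (w i) : ℝ) : ℂ) := by
  simp only [dotProduct, Pi.star_apply, star_mul_self_c]
  push_cast
  rfl

lemma real_smul_mat {n m : ℕ} (r : ℝ) (P : Matrix (Fin n) (Fin m) ℂ) :
    r • P = ((r : ℂ)) • P := by
  ext a b
  simp [Complex.real_smul]

lemma herm_smul_real {n : ℕ} (r : ℝ) {M : Matrix (Fin n) (Fin n) ℂ} (h : M.IsHermitian) :
    (r • M).IsHermitian := by
  show (r • M)ᴴ = r • M
  rw [Matrix.conjTranspose_smul, star_trivial, h.eq]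

open scoped MatrixOrder in
lemma psd_eq_conjT_mul {n : ℕ} {M : Matrix (Fin n) (Fin n) ℂ} (hM : M.PosSemidef) :
    ∃ B : Matrix (Fin n) (Fin n) ℂ, M = Bᴴ * B := by
  classical
  obtain ⟨X, hX, -, hXX⟩ := CFC.exists_sqrt_of_isSelfAdjoint_of_quasispectrumRestricts
    hM.isHermitian.isSelfAdjoint
    (QuasispectrumRestricts.nnreal_of_nonneg (Matrix.nonneg_iff_posSemidef.mpr hM))
  refine ⟨X, ?_⟩
  rw [← hXX, ← Matrix.star_eq_conjTranspose, hX.star_eq]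

lemma psd_smul_real {n : ℕ} {r : ℝ} (hr : 0 ≤ r) {M : Matrix (Fin n) (Fin n) ℂ}
    (h : M.PosSemidef) : (r • M).PosSemidef := by
  refine Matrix.PosSemidef.of_dotProduct_mulVec_nonneg (herm_smul_real r h.1) fun x => ?_
  rw [Matrix.smul_mulVec, dotProduct_smul, Complex.real_smul]
  have h0 : 0 ≤ (r : ℂ) := by
    rw [Complex.nonneg_iff]; simp [hr]
  exact mul_nonneg h0 (h.dotProduct_mulVec_nonneg x)

lemma psd_trace_nonneg {n : ℕ} {M : Matrix (Fin n) (Fin n) ℂ} (hM : M.PosSemidef) :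
    0 ≤ M.trace := by
  rw [Matrix.trace]
  refine Finset.sum_nonneg fun k _ => ?_
  set x : Fin n → ℂ := Pi.single k 1 with hx
  have h0 := hM.dotProduct_mulVec_nonneg x
  have hs : star x = x := by
    rw [hx]
    funext i
    rw [Pi.star_apply]
    rcases eq_or_ne i k with rfl | hik
    · simp
    · simp [Pi.single_eq_of_ne hik]
  rw [hs, hx, Matrix.mulVec_single, single_dotProduct] at h0
  simpa using h0

lemma trace_psd_psd {n : ℕ} {P Q : Matrix (Fin n) (Fin n) ℂ} (hP : P.PosSemidef)
    (hQ : Q.PosSemidef) : 0 ≤ (P * Q).trace := by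
  obtain ⟨B, rfl⟩ := psd_eq_conjT_mul hP
  rw [Matrix.trace_mul_cycle Bᴴ B Q, Matrix.trace_mul_cycle Q Bᴴ B]
  exact psd_trace_nonneg (hQ.mul_mul_conjTranspose_same B)

lemma psd_vmv {n : ℕ} (v : Fin n → ℂ) : (vecMulVec v (star v)).PosSemidef := by
  refine Matrix.PosSemidef.of_dotProduct_mulVec_nonneg (vmv_conjT n n v v) fun x => ?_
  have e : star x ⬝ᵥ (vecMulVec v (star v) *ᵥ x)
      = star ((star v) ⬝ᵥ x) * ((star v) ⬝ᵥ x) := by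
    simp only [dotProduct, mulVec, vecMulVec_apply, Pi.star_apply, star_sum, star_mul',
      star_star, Finset.mul_sum, Finset.sum_mul]
    rw [Finset.sum_comm]
    exact Finset.sum_congr rfl fun i _ => Finset.sum_congr rfl fun j _ => by ring
  rw [e, star_mul_self_c]
  rw [Complex.nonneg_iff]
  simp [Complex.normSq_nonneg]

lemma trace_aha {n m : ℕ} (A : Matrix (Fin n) (Fin m) ℂ) :
    (Aᴴ * A).trace = ((∑ j, ∑ i, Complex.normSq (A i j) : ℝ) : ℂ) := by
  simp only [Matrix.trace, Matrix.diag, Matrix.mul_apply, Matrix.conjTranspose_apply,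
    star_mul_self_c]
  push_cast
  rfl

lemma herm_decomp {n : ℕ} {M : Matrix (Fin n) (Fin n) ℂ} (hM : M.IsHermitian) :
    ∃ P Q : Matrix (Fin n) (Fin n) ℂ, P.PosSemidef ∧ Q.PosSemidef ∧ M = P - Q := by
  classical
  set U : Matrix (Fin n) (Fin n) ℂ := (hM.eigenvectorUnitary : Matrix (Fin n) (Fin n) ℂ)
  set lam := hM.eigenvalues with hlam
  have hmax : ∀ a : ℝ, max a 0 - max (-a) 0 = a := by
    intro a
    rcases le_total a 0 with h | h
    · rw [max_eq_right h, max_eq_left (by linarith : (0:ℝ) ≤ -a)]; ring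
    · rw [max_eq_left h, max_eq_right (by linarith : -a ≤ (0:ℝ))]; ring
  refine ⟨U * diagonal (fun k => ((max (lam k) 0 : ℝ) : ℂ)) * Uᴴ,
          U * diagonal (fun k => ((max (-lam k) 0 : ℝ) : ℂ)) * Uᴴ, ?_, ?_, ?_⟩
  · refine Matrix.PosSemidef.mul_mul_conjTranspose_same ?_ U
    refine Matrix.PosSemidef.diagonal ?_
    intro k
    simp only [Pi.zero_apply]
    rw [Complex.nonneg_iff]
    simp [le_max_right]
  · refine Matrix.PosSemidef.mul_mul_conjTranspose_same ?_ U
    refine Matrix.PosSemidef.diagonal ?_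
    intro k
    simp only [Pi.zero_apply]
    rw [Complex.nonneg_iff]
    simp [le_max_right]
  · have hs := hM.spectral_theorem
    rw [Unitary.conjStarAlgAut_apply, Matrix.star_eq_conjTranspose] at hs
    have hDsub : diagonal (fun k => ((max (lam k) 0 : ℝ) : ℂ))
        - diagonal (fun k => ((max (-lam k) 0 : ℝ) : ℂ))
        = diagonal (RCLike.ofReal ∘ lam) := by
      rw [Matrix.diagonal_sub]
      have hfun : (fun k => ((max (lam k) 0 : ℝ) : ℂ) - ((max (-lam k) 0 : ℝ) : ℂ))
          = RCLike.ofReal ∘ lam := by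
        funext k
        simp only [Function.comp_apply]
        rw [← Complex.ofReal_sub, hmax]
        rfl
      rw [hfun]
    rw [← Matrix.sub_mul, ← Matrix.mul_sub, hDsub]
    exact hs
lemma colCS (n : ℕ) (a b : Fin n → ℂ) :
    ‖∑ j, (starRingEnd ℂ) (a j) * b j‖ ≤
      Real.sqrt (∑ j, Complex.normSq (a j)) * Real.sqrt (∑ j, Complex.normSq (b j)) := by
  have h1 : ‖∑ j, (starRingEnd ℂ) (a j) * b j‖
      ≤ ∑ j, ‖a j‖ * ‖b j‖ := by
    refine (norm_sum_le _ _).trans ?_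
    exact Finset.sum_le_sum fun j _ => by simp [_root_.map_mul]
  refine h1.trans ?_
  rw [← Real.sqrt_mul (Finset.sum_nonneg fun j _ => Complex.normSq_nonneg _)]
  rw [Real.le_sqrt (Finset.sum_nonneg fun j _ =>
    mul_nonneg (norm_nonneg _) (norm_nonneg _))
    (mul_nonneg (Finset.sum_nonneg fun j _ => Complex.normSq_nonneg _)
      (Finset.sum_nonneg fun j _ => Complex.normSq_nonneg _))]
  simp only [Complex.normSq_eq_norm_sq]
  exact Finset.sum_mul_sq_le_sq_mul_sq _ _ _

lemma core {n : ℕ} {P A Y : Matrix (Fin n) (Fin n) ℂ} {t : ℝ} (ht : 0 ≤ t)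
    (hP : P.PosSemidef) (h : (t • P - Aᴴ * A).PosSemidef) :
    ‖(Aᴴ * Y).trace‖ ^ 2 ≤ (n : ℝ) * t * ((P * (Yᴴ * Y)).trace).re := by
  classical
  set U : Matrix (Fin n) (Fin n) ℂ := (hP.1.eigenvectorUnitary : Matrix (Fin n) (Fin n) ℂ) with hUdef
  have hU2 : U * Uᴴ = 1 := by
    rw [← Matrix.star_eq_conjTranspose]
    exact Matrix.mem_unitaryGroup_iff.mp hP.1.eigenvectorUnitary.2
  have hU1 : Uᴴ * U = 1 := by
    rw [← Matrix.star_eq_conjTranspose]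
    exact Matrix.mem_unitaryGroup_iff'.mp hP.1.eigenvectorUnitary.2
  set lam := hP.1.eigenvalues with hlam
  have hlam0 : ∀ k, 0 ≤ lam k := hP.eigenvalues_nonneg
  have hdiag : Uᴴ * P * U = diagonal (fun k => (lam k : ℂ)) := by
    have := hP.1.conjStarAlgAut_star_eigenvectorUnitary
    rw [Unitary.conjStarAlgAut_apply, Unitary.coe_star, star_star,
      Matrix.star_eq_conjTranspose] at this
    exact this
  set A' := Uᴴ * A * U with hA'def
  set Y' := Uᴴ * Y * U with hY'def
  have conj_mul : ∀ X Z : Matrix (Fin n) (Fin n) ℂ,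
      (Uᴴ * X * U) * (Uᴴ * Z * U) = Uᴴ * (X * Z) * U := by
    intro X Z
    have h3 : U * (Uᴴ * (Z * U)) = Z * U := by rw [← Matrix.mul_assoc, hU2, Matrix.one_mul]
    simp only [Matrix.mul_assoc, h3]
  have hA'H : A'ᴴ = Uᴴ * Aᴴ * U := by
    simp [hA'def, Matrix.conjTranspose_mul, Matrix.mul_assoc]
  have hY'H : Y'ᴴ = Uᴴ * Yᴴ * U := by
    simp [hY'def, Matrix.conjTranspose_mul, Matrix.mul_assoc]
  have key0 : (Aᴴ * Y).trace = (A'ᴴ * Y').trace := by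
    rw [hA'H, hY'def, conj_mul, Matrix.trace_mul_cycle, ← Matrix.mul_assoc, hU2, Matrix.one_mul]
  have key1 : ((t : ℝ) • diagonal (fun k => (lam k : ℂ)) - A'ᴴ * A').PosSemidef := by
    have h2 := h.conjTranspose_mul_mul_same U
    have e : Uᴴ * (t • P - Aᴴ * A) * U
        = t • (Uᴴ * P * U) - Uᴴ * (Aᴴ * A) * U := by
      rw [Matrix.mul_sub, Matrix.sub_mul, Matrix.mul_smul, Matrix.smul_mul]
    rw [e, hdiag] at h2
    rw [hA'H, conj_mul] at *
    exact h2
  -- diagonal bound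
  have key2 : ∀ k, (∑ j, Complex.normSq (A' j k)) ≤ t * lam k := by
    intro k
    set x : Fin n → ℂ := Pi.single k 1 with hx
    have h0 := key1.dotProduct_mulVec_nonneg x
    have hs : star x = x := by
      rw [hx]
      funext i
      rw [Pi.star_apply]
      rcases eq_or_ne i k with rfl | hik
      · simp
      · simp [Pi.single_eq_of_ne hik]
    rw [hs, hx] at h0
    have hv : (Pi.single k (1:ℂ)) ⬝ᵥ
        ((((t : ℝ) • diagonal (fun k => (lam k : ℂ)) - A'ᴴ * A')) *ᵥ Pi.single k 1)
        = ((t * lam k - ∑ j, Complex.normSq (A' j k) : ℝ) : ℂ) := by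
      rw [Matrix.mulVec_single, single_dotProduct]
      simp only [Pi.smul_apply, op_smul_eq_mul, Matrix.col_apply,
        mul_one, one_mul, Matrix.sub_apply, Matrix.smul_apply,
        Matrix.diagonal_apply_eq, Matrix.mul_apply, Matrix.conjTranspose_apply,
        star_mul_self_c, Complex.real_smul]
      push_cast
      ring
    rw [hv] at h0
    have := (Complex.nonneg_iff.mp h0).1
    simp only [Complex.ofReal_re] at this
    linarith
  -- column norms of Y'
  set q : Fin n → ℝ := fun k => ∑ j, Complex.normSq (Y' j k) with hq
  have hq0 : ∀ k, 0 ≤ q k := fun k => Finset.sum_nonneg fun j _ => Complex.normSq_nonneg _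
  -- Step A
  have stepA : ‖(A'ᴴ * Y').trace‖ ≤ ∑ k, Real.sqrt (t * lam k) * Real.sqrt (q k) := by
    have htr : (A'ᴴ * Y').trace = ∑ k, ∑ j, (starRingEnd ℂ) (A' j k) * Y' j k := by
      simp [Matrix.trace, Matrix.diag, Matrix.mul_apply, Matrix.conjTranspose_apply,
        Complex.star_def]
    rw [htr]
    refine (norm_sum_le _ _).trans ?_
    refine Finset.sum_le_sum fun k _ => ?_
    refine (colCS n (fun j => A' j k) (fun j => Y' j k)).trans ?_
    exact mul_le_mul_of_nonneg_right (Real.sqrt_le_sqrt (key2 k)) (Real.sqrt_nonneg _)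
  -- Step B
  have stepB : (∑ k, Real.sqrt (t * lam k) * Real.sqrt (q k)) ^ 2
      ≤ (n : ℝ) * ∑ k, (t * lam k) * q k := by
    have hcs := Finset.sum_mul_sq_le_sq_mul_sq Finset.univ (fun _ : Fin n => (1:ℝ))
      (fun k => Real.sqrt (t * lam k) * Real.sqrt (q k))
    simp only [one_mul, one_pow, Finset.sum_const, Finset.card_univ, Fintype.card_fin,
      nsmul_eq_mul, mul_one] at hcs
    refine hcs.trans ?_
    refine mul_le_mul_of_nonneg_left (le_of_eq ?_) (Nat.cast_nonneg n)
    refine Finset.sum_congr rfl fun k _ => ?_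
    rw [mul_pow, Real.sq_sqrt (mul_nonneg ht (hlam0 k)), Real.sq_sqrt (hq0 k)]
  -- Step C
  have hPd : P = U * (diagonal fun k => (lam k : ℂ)) * Uᴴ := by
    rw [← hdiag]
    simp only [Matrix.mul_assoc]
    rw [hU2, Matrix.mul_one, ← Matrix.mul_assoc, hU2, Matrix.one_mul]
  have stepC : ((P * (Yᴴ * Y)).trace).re = ∑ k, lam k * q k := by
    have hYY : Y'ᴴ * Y' = Uᴴ * (Yᴴ * Y) * U := by rw [hY'H, hY'def, conj_mul]
    have e1 : (P * (Yᴴ * Y)).trace = ((diagonal fun k => (lam k : ℂ)) * (Y'ᴴ * Y')).trace := by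
      rw [hYY, hPd]
      have e0 : (U * (diagonal fun k => (lam k : ℂ)) * Uᴴ) * (Yᴴ * Y)
          = U * (diagonal fun k => (lam k : ℂ)) * (Uᴴ * (Yᴴ * Y)) := by
        simp only [Matrix.mul_assoc]
      rw [e0, Matrix.trace_mul_cycle, Matrix.trace_mul_comm]
    rw [e1]
    have e2 : ((diagonal fun k => (lam k : ℂ)) * (Y'ᴴ * Y')).trace
        = ((∑ k, lam k * q k : ℝ) : ℂ) := by
      have : ∀ k, (Y'ᴴ * Y') k k = ((q k : ℝ) : ℂ) := by
        intro k
        simp only [Matrix.mul_apply, Matrix.conjTranspose_apply, star_mul_self_c, hq]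
        push_cast
        ring
      simp only [Matrix.trace, Matrix.diag, Matrix.diagonal_mul, this]
      push_cast
      ring
    rw [e2, Complex.ofReal_re]
  -- combine
  rw [key0, stepC]
  calc ‖(A'ᴴ * Y').trace‖ ^ 2
      ≤ (∑ k, Real.sqrt (t * lam k) * Real.sqrt (q k)) ^ 2 := by
        exact pow_le_pow_left₀ (norm_nonneg _) stepA 2
    _ ≤ (n : ℝ) * ∑ k, (t * lam k) * q k := stepB
    _ = (n : ℝ) * t * ∑ k, lam k * q k := by
        rw [Finset.mul_sum, Finset.mul_sum]
        exact Finset.sum_congr rfl fun k _ => by ring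
end AdjSchwarz

/-- **The Hilbert–Schmidt adjoint of a Schwarz map is a Schwarz map.** If
`Φ : B(H₁) → B(H₂)` satisfies `Φ(X)* Φ(X) ≤ c · Φ(X* X)` for all `X` (with `c ≥ 0`), then
its Hilbert–Schmidt adjoint `Ψ = Φ*` satisfies
`Ψ(Y)* Ψ(Y) ≤ d₁ d₂ c · Ψ(Y* Y)` for all `Y`, where `dᵢ = dim Hᵢ`.
In particular `‖Φ*‖_S ≤ d₁ d₂ ‖Φ‖_S`. -/
theorem adjoint_schwarz_map {d₁ d₂ : ℕ}
    (Φ : Matrix (Fin d₁) (Fin d₁) ℂ →ₗ[ℂ] Matrix (Fin d₂) (Fin d₂) ℂ)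
    (Ψ : Matrix (Fin d₂) (Fin d₂) ℂ →ₗ[ℂ] Matrix (Fin d₁) (Fin d₁) ℂ)
    (hadj : ∀ (X : Matrix (Fin d₁) (Fin d₁) ℂ) (Y : Matrix (Fin d₂) (Fin d₂) ℂ),
      ((Φ X)ᴴ * Y).trace = (Xᴴ * Ψ Y).trace)
    (c : ℝ) (hc : 0 ≤ c)
    (hΦ : ∀ X : Matrix (Fin d₁) (Fin d₁) ℂ, (c • Φ (Xᴴ * X) - (Φ X)ᴴ * Φ X).PosSemidef) :
    ∀ Y : Matrix (Fin d₂) (Fin d₂) ℂ,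
      (((d₁ : ℝ) * d₂ * c) • Ψ (Yᴴ * Y) - (Ψ Y)ᴴ * Ψ Y).PosSemidef := by
  intro Y
  classical
  have star_single : ∀ (m : ℕ) (i : Fin m), star (Pi.single i 1 : Fin m → ℂ) = Pi.single i 1 := by
    intro m i
    funext a
    rw [Pi.star_apply]
    rcases eq_or_ne a i with rfl | h
    · simp
    · simp [Pi.single_eq_of_ne h]
  have entry : ∀ (Z : Matrix (Fin d₂) (Fin d₂) ℂ) (i j : Fin d₁),
      Ψ Z i j = ((Φ (vecMulVec (Pi.single i 1) (star (Pi.single j 1))))ᴴ * Z).trace := by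
    intro Z i j
    rw [hadj, AdjSchwarz.trace_vmv, star_single, Matrix.mulVec_single, single_dotProduct]
    simp
  by_cases hc0 : c = 0
  · -- Φ = 0 case
    have hzero : ∀ X, Φ X = 0 := by
      intro X
      have h1 := hΦ X
      rw [hc0, zero_smul, zero_sub] at h1
      have h2 := Matrix.posSemidef_conjTranspose_mul_self (Φ X)
      have t1 := AdjSchwarz.psd_trace_nonneg h1
      have t2 := AdjSchwarz.psd_trace_nonneg h2
      rw [Matrix.trace_neg] at t1
      have t3 : ((Φ X)ᴴ * Φ X).trace = 0 := le_antisymm (neg_nonneg.mp t1) t2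
      rw [AdjSchwarz.trace_aha, Complex.ofReal_eq_zero] at t3
      have t4 : ∀ j ∈ Finset.univ, (∑ i, Complex.normSq (Φ X i j)) = 0 := by
        rw [← Finset.sum_eq_zero_iff_of_nonneg (fun j _ =>
            Finset.sum_nonneg fun i _ => Complex.normSq_nonneg _)]
        exact t3
      ext i j
      have t5 := (Finset.sum_eq_zero_iff_of_nonneg
        (fun i _ => Complex.normSq_nonneg (Φ X i j))).mp (t4 j (Finset.mem_univ j)) i
          (Finset.mem_univ i)
      simpa [Complex.normSq_eq_zero] using t5
    have hΨ0 : ∀ Z, Ψ Z = 0 := by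
      intro Z
      ext i j
      rw [entry]
      simp [hzero]
    rw [hΨ0, hΨ0]
    simpa using Matrix.PosSemidef.zero
  -- c > 0 case
  · have hcpos : 0 < c := lt_of_le_of_ne hc fun h => hc0 h.symm
    -- Step 1: Φ of XᴴX is Hermitian
    have step1 : ∀ X : Matrix (Fin d₁) (Fin d₁) ℂ, (Φ (Xᴴ * X)).IsHermitian := by
      intro X
      have h1 := (hΦ X).1
      have h2 : ((Φ X)ᴴ * Φ X).IsHermitian := Matrix.isHermitian_conjTranspose_mul_self _
      have h3 : (c • Φ (Xᴴ * X)).IsHermitian := by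
        have h4 := h1.add h2
        rw [sub_add_cancel] at h4
        exact h4
      have h5 := AdjSchwarz.herm_smul_real c⁻¹ h3
      rwa [smul_smul, inv_mul_cancel₀ hc0, one_smul] at h5
    -- Step 2: Φ of PSD is Hermitian
    have step2 : ∀ M : Matrix (Fin d₁) (Fin d₁) ℂ, M.PosSemidef → (Φ M).IsHermitian := by
      intro M hM
      obtain ⟨B, rfl⟩ := AdjSchwarz.psd_eq_conjT_mul hM
      exact step1 B
    -- Step 3: Φ of Hermitian is Hermitian
    have step3 : ∀ M : Matrix (Fin d₁) (Fin d₁) ℂ, M.IsHermitian → (Φ M).IsHermitian := by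
      intro M hM
      obtain ⟨P, Q, hP, hQ, rfl⟩ := AdjSchwarz.herm_decomp hM
      rw [_root_.map_sub]
      exact (step2 _ hP).sub (step2 _ hQ)
    -- Step 4: Φ is Hermitian-preserving
    have hph : ∀ X : Matrix (Fin d₁) (Fin d₁) ℂ, (Φ X)ᴴ = Φ (Xᴴ) := by
      intro X
      set H : Matrix (Fin d₁) (Fin d₁) ℂ := ((1:ℂ)/2) • (X + Xᴴ) with hH
      set K : Matrix (Fin d₁) (Fin d₁) ℂ := (Complex.I/2) • (Xᴴ - X) with hK
      have hHh : H.IsHermitian := by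
        show Hᴴ = H
        rw [hH, Matrix.conjTranspose_smul, Matrix.conjTranspose_add,
          Matrix.conjTranspose_conjTranspose]
        rw [show star ((1:ℂ)/2) = (1:ℂ)/2 by simp]
        rw [add_comm]
      have hKh : K.IsHermitian := by
        show Kᴴ = K
        rw [hK, Matrix.conjTranspose_smul, Matrix.conjTranspose_sub,
          Matrix.conjTranspose_conjTranspose]
        rw [show star (Complex.I/2) = -(Complex.I/2) by
          simp [Complex.star_def, Complex.conj_I]; ring]
        rw [neg_smul, ← smul_neg, neg_sub]
      have hXeq : X = H + Complex.I • K := by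
        ext a b
        simp only [hH, hK, Matrix.add_apply, Matrix.smul_apply, Matrix.sub_apply,
          Matrix.conjTranspose_apply, smul_eq_mul, Complex.star_def]
        linear_combination ((X a b - (starRingEnd ℂ) (X b a))/2) * Complex.I_sq
      have hXHeq : Xᴴ = H - Complex.I • K := by
        ext a b
        simp only [hH, hK, Matrix.sub_apply, Matrix.add_apply, Matrix.smul_apply,
          Matrix.conjTranspose_apply, smul_eq_mul, Complex.star_def]
        linear_combination (((starRingEnd ℂ) (X b a) - X a b)/2) * Complex.I_sq
      calc (Φ X)ᴴ = (Φ H + Complex.I • Φ K)ᴴ := by rw [← _root_.map_smul, ← _root_.map_add, ← hXeq]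
        _ = Φ H - Complex.I • Φ K := by
            rw [Matrix.conjTranspose_add, Matrix.conjTranspose_smul, step3 H hHh, step3 K hKh,
              Complex.star_def, Complex.conj_I, neg_smul, ← sub_eq_add_neg]
        _ = Φ (Xᴴ) := by rw [hXHeq]; simp only [_root_.map_sub, _root_.map_smul]
    -- Φ is PSD-preserving
    have hpos : ∀ M : Matrix (Fin d₁) (Fin d₁) ℂ, M.PosSemidef → (Φ M).PosSemidef := by
      intro M hM
      obtain ⟨B, rfl⟩ := AdjSchwarz.psd_eq_conjT_mul hM
      have h1 := hΦ B
      have h2 := Matrix.posSemidef_conjTranspose_mul_self (Φ B)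
      have h3 : (c • Φ (Bᴴ * B)).PosSemidef := by
        have h4 := h1.add h2
        rwa [sub_add_cancel] at h4
      have h5 := AdjSchwarz.psd_smul_real (inv_nonneg.mpr hc) h3
      rwa [smul_smul, inv_mul_cancel₀ hc0, one_smul] at h5
    -- Ψ (YᴴY) is Hermitian
    have hYYh : (Yᴴ * Y).IsHermitian := Matrix.isHermitian_conjTranspose_mul_self Y
    have hpsih : (Ψ (Yᴴ * Y)).IsHermitian := by
      show (Ψ (Yᴴ * Y))ᴴ = Ψ (Yᴴ * Y)
      ext i j
      rw [Matrix.conjTranspose_apply, entry _ j i, entry _ i j]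
      rw [show vecMulVec (Pi.single j (1:ℂ)) (star (Pi.single i 1))
          = (vecMulVec (Pi.single i (1:ℂ)) (star (Pi.single j 1)))ᴴ from
        (AdjSchwarz.vmv_conjT d₁ d₁ _ _).symm]
      rw [← hph, Matrix.conjTranspose_conjTranspose]
      rw [← Matrix.trace_conjTranspose, Matrix.conjTranspose_mul, hYYh.eq,
        Matrix.trace_mul_comm]
    refine Matrix.PosSemidef.of_dotProduct_mulVec_nonneg ?_ ?_
    · exact (AdjSchwarz.herm_smul_real _ hpsih).sub
        (Matrix.isHermitian_conjTranspose_mul_self _)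
    · intro v
      set w : Fin d₁ → ℂ := Ψ Y *ᵥ v with hw
      set nw : ℝ := ∑ i, Complex.normSq (w i) with hnw
      have hnw0 : 0 ≤ nw := Finset.sum_nonneg fun i _ => Complex.normSq_nonneg _
      set V : Matrix (Fin d₁) (Fin d₁) ℂ := vecMulVec v (star v) with hV
      set P : Matrix (Fin d₂) (Fin d₂) ℂ := Φ V with hPdef
      have hVpsd : V.PosSemidef := AdjSchwarz.psd_vmv v
      have hPpsd : P.PosSemidef := hpos V hVpsd
      -- identity I1
      have I1 : star v ⬝ᵥ (Ψ (Yᴴ * Y) *ᵥ v) = (P * (Yᴴ * Y)).trace := by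
        rw [← AdjSchwarz.trace_vmv, ← hadj, hph, hVpsd.1.eq]
      have hτ : 0 ≤ (P * (Yᴴ * Y)).trace :=
        AdjSchwarz.trace_psd_psd hPpsd (Matrix.posSemidef_conjTranspose_mul_self Y)
      obtain ⟨hτre, hτim⟩ := Complex.nonneg_iff.mp hτ
      set τ : ℝ := ((P * (Yᴴ * Y)).trace).re with hτdef
      have hτeq : (P * (Yᴴ * Y)).trace = (τ : ℂ) := by
        apply Complex.ext
        · simp [hτdef]
        · simp [hτdef, ← hτim]
      -- the Schwarz inequality applied to wv*
      set A : Matrix (Fin d₂) (Fin d₂) ℂ := Φ (vecMulVec w (star v)) with hA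
      have I3 : (Aᴴ * Y).trace = ((nw : ℝ) : ℂ) := by
        rw [hA, hadj, AdjSchwarz.trace_vmv, ← hw, AdjSchwarz.dot_star_self, hnw]
      have I4 : ((c * nw : ℝ) • P - Aᴴ * A).PosSemidef := by
        have h1 := hΦ (vecMulVec w (star v))
        rw [AdjSchwarz.vmv_sq, _root_.map_smul, AdjSchwarz.dot_star_self, ← hnw, ← hV, ← hPdef] at h1
        have e : c • (((nw : ℝ) : ℂ) • P) = ((c * nw : ℝ)) • P := by
          rw [← AdjSchwarz.real_smul_mat nw P, smul_smul]
        rwa [e, ← hA] at h1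
      have hcore := AdjSchwarz.core (mul_nonneg hc hnw0) hPpsd I4 (Y := Y)
      rw [I3] at hcore
      rw [Complex.norm_real, Real.norm_of_nonneg hnw0] at hcore
      -- hcore : nw ^ 2 ≤ d₂ * (c * nw) * τ
      -- compute the quadratic form
      have expand : star v ⬝ᵥ (((((d₁ : ℝ) * d₂ * c) • Ψ (Yᴴ * Y) - (Ψ Y)ᴴ * Ψ Y)) *ᵥ v)
          = ((((d₁ : ℝ) * d₂ * c) * τ - nw : ℝ) : ℂ) := by
        rw [Matrix.sub_mulVec, dotProduct_sub]
        have e1 : star v ⬝ᵥ ((((d₁ : ℝ) * d₂ * c) • Ψ (Yᴴ * Y)) *ᵥ v)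
            = ((((d₁ : ℝ) * d₂ * c) * τ : ℝ) : ℂ) := by
          rw [Matrix.smul_mulVec, dotProduct_smul, I1, hτeq, Complex.real_smul]
          push_cast
          ring
        have e2 : star v ⬝ᵥ (((Ψ Y)ᴴ * Ψ Y) *ᵥ v) = ((nw : ℝ) : ℂ) := by
          rw [← Matrix.mulVec_mulVec, Matrix.dotProduct_mulVec, ← Matrix.star_mulVec,
            ← hw, AdjSchwarz.dot_star_self, hnw]
        rw [e1, e2]
        push_cast
        ring
      rw [expand]
      rw [Complex.nonneg_iff]
      refine ⟨?_, by simp⟩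
      simp only [Complex.ofReal_re]
      -- real inequality
      rcases eq_or_lt_of_le hnw0 with heq | hlt
      · have : (0:ℝ) ≤ (d₁ : ℝ) * d₂ * c * τ := by positivity
        linarith [this, heq]
      · have hd1 : (1 : ℝ) ≤ (d₁ : ℝ) := by
          have hne : d₁ ≠ 0 := by
            intro h
            subst h
            rw [hnw] at hlt
            simp at hlt
          exact_mod_cast Nat.one_le_iff_ne_zero.mpr hne
        have h6 : nw ≤ (d₂ : ℝ) * c * τ := by
          have h7 : nw * nw ≤ ((d₂ : ℝ) * c * τ) * nw := by nlinarith [hcore]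
          exact le_of_mul_le_mul_right h7 hlt
        have h8 : (0:ℝ) ≤ (d₂ : ℝ) * c * τ := le_trans (le_of_lt hlt) h6
        nlinarith [h6, h8, hd1]
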